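/- arXiv:1912.07042 — 2 statements merged into one kernel-verified Lean document; each statement's English description precedes it below -/
import Mathlib

section
/- Static non-coverability versus reconfigurable coverability for the example protocol: for the broadcast protocol B_ex, no static execution covers {☺}, but there exists a reconfigurable execution (with 3 nodes) covering {☺}. -/
/-- A broadcast protocol over finite state set `Q` and finite message alphabet `M`.
`I` is the set of initial states, `br q m q'` means `(q, !!m, q') ∈ Δ` (a broadcast
transition) and `rcv q m q'` means `(q, ??m, q') ∈ Δ` (a reception transition).
The protocol is complete for receptions. -/
structure BroadcastProtocol (Q M : Type) [Fintype Q] [DecidableEq Q] [Fintype M] where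
  I : Finset Q
  br : Q → M → Q → Prop
  rcv : Q → M → Q → Prop
  complete : ∀ q m, ∃ q', rcv q m q'

section Execs
variable {Q M : Type} [Fintype Q] [DecidableEq Q] [Fintype M]

/-- A reconfigurable execution of length `r` over the finite node type `ν`:
`lab i v` is the state of node `v` in the `i`-th configuration, `edges i` is the
(symmetric, irreflexive) communication topology of the `i`-th configuration,
and in the `i`-th step node `sender i` broadcasts message `msg i` to its
neighbours; the topology may change arbitrarily at each step. -/
structure RExec (P : BroadcastProtocol Q M) (ν : Type) [Fintype ν] [DecidableEq ν]
    (r : ℕ) where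
  lab : Fin (r + 1) → ν → Q
  edges : Fin (r + 1) → ν → ν → Prop
  edges_symm : ∀ i, Symmetric (edges i)
  edges_irrefl : ∀ i, Irreflexive (edges i)
  sender : Fin r → ν
  msg : Fin r → M
  init : ∀ v, lab 0 v ∈ P.I
  step_br : ∀ i : Fin r, P.br (lab i.castSucc (sender i)) (msg i) (lab i.succ (sender i))
  step_rcv : ∀ i : Fin r, ∀ v, v ≠ sender i →
    (edges i.castSucc (sender i) v → P.rcv (lab i.castSucc v) (msg i) (lab i.succ v)) ∧
    (¬ edges i.castSucc (sender i) v → lab i.succ v = lab i.castSucc v)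

namespace RExec

variable {P : BroadcastProtocol Q M} {ν : Type} [Fintype ν] [DecidableEq ν] {r : ℕ}

/-- Labelling of the last configuration. -/
def lastLab (ρ : RExec P ν r) : ν → Q := ρ.lab (Fin.last r)

/-- The execution covers `F` if a node of the last configuration is labelled in `F`. -/
def Covers (ρ : RExec P ν r) (F : Set Q) : Prop := ∃ v, ρ.lastLab v ∈ F

/-- The active length of node `v`: the number of steps in which `v` broadcasts. -/
def activeLen (ρ : RExec P ν r) (v : ν) : ℕ :=
  (Finset.univ.filter fun i : Fin r => ρ.sender i = v).card

end RExec

/-- A static execution of length `r` over the finite node type `ν`: the communication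
topology `E` is fixed throughout and every broadcast reaches all neighbours. -/
structure SExec (P : BroadcastProtocol Q M) (ν : Type) [Fintype ν] [DecidableEq ν]
    (r : ℕ) where
  lab : Fin (r + 1) → ν → Q
  E : ν → ν → Prop
  E_symm : Symmetric E
  E_irrefl : Irreflexive E
  sender : Fin r → ν
  msg : Fin r → M
  init : ∀ v, lab 0 v ∈ P.I
  step_br : ∀ i : Fin r, P.br (lab i.castSucc (sender i)) (msg i) (lab i.succ (sender i))
  step_rcv : ∀ i : Fin r, ∀ v, v ≠ sender i →
    (E (sender i) v → P.rcv (lab i.castSucc v) (msg i) (lab i.succ v)) ∧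
    (¬ E (sender i) v → lab i.succ v = lab i.castSucc v)

namespace SExec

variable {P : BroadcastProtocol Q M} {ν : Type} [Fintype ν] [DecidableEq ν] {r : ℕ}

/-- Labelling of the last configuration. -/
def lastLab (ρ : SExec P ν r) : ν → Q := ρ.lab (Fin.last r)

/-- The execution covers `F` if a node of the last configuration is labelled in `F`. -/
def Covers (ρ : SExec P ν r) (F : Set Q) : Prop := ∃ v, ρ.lastLab v ∈ F

end SExec

end Execs
/- ## The example protocol B_ex -/

inductive ExQ : Type
  | q0 | q1 | q2 | q3 | q4 | r1 | bot | smiley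
  deriving DecidableEq

instance : Fintype ExQ :=
  ⟨{.q0, .q1, .q2, .q3, .q4, .r1, .bot, .smiley}, by intro x; cases x <;> first | decide | simp⟩

inductive ExM : Type
  | a | b1 | b2
  deriving DecidableEq

instance : Fintype ExM :=
  ⟨{.a, .b1, .b2}, by intro x; cases x <;> first | decide | simp⟩

def ExBr : ExQ → ExM → ExQ → Prop
  | .q0, .a, .q0 => True
  | .q1, .b1, .q2 => True
  | .q3, .b2, .q4 => True
  | _, _, _ => False

def ExRcv : ExQ → ExM → ExQ → Prop
  | .q0, .a, q' => q' = .q1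
  | .q2, .a, q' => q' = .q3
  | .q0, .b1, q' => q' = .r1 ∨ q' = .bot
  | .q0, .b2, q' => q' = .bot
  | .r1, .b2, q' => q' = .smiley
  | q, _, q' => q' = q

def ExProt : BroadcastProtocol ExQ ExM where
  I := {ExQ.q0}
  br := ExBr
  rcv := ExRcv
  complete := by
    intro q m
    cases q <;> cases m <;> first
      | exact ⟨_, rfl⟩
      | exact ⟨_, Or.inl rfl⟩


/- ## Auxiliary material -/

instance : ∀ q m q', Decidable (ExBr q m q') := fun q m q' => by
  unfold ExBr; split <;> infer_instance

instance : ∀ q m q', Decidable (ExRcv q m q') := fun q m q' => by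
  cases q <;> cases m <;> first
    | exact inferInstanceAs (Decidable (_ = _))
    | exact inferInstanceAs (Decidable (_ ∨ _))

lemma exbr_to_q0 : ∀ x m, ExBr x m ExQ.q0 → x = ExQ.q0 := by decide
lemma exrcv_to_q0 : ∀ x m, ExRcv x m ExQ.q0 → x = ExQ.q0 := by decide
lemma exrcv_q0_b1 : ∀ y, ExRcv ExQ.q0 ExM.b1 y → y ≠ ExQ.q0 := by decide
lemma exbr_to_smiley : ∀ x m, ¬ ExBr x m ExQ.smiley := by decide
lemma exrcv_to_smiley : ∀ x m, ExRcv x m ExQ.smiley →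
    x = ExQ.smiley ∨ (x = ExQ.r1 ∧ m = ExM.b2) := by decide
lemma exbr_to_q3 : ∀ x m, ¬ ExBr x m ExQ.q3 := by decide
lemma exrcv_to_q3 : ∀ x m, ExRcv x m ExQ.q3 →
    x = ExQ.q3 ∨ (x = ExQ.q2 ∧ m = ExM.a) := by decide
lemma exbr_to_q2 : ∀ x m y, ExBr x m y → y = ExQ.q2 → m = ExM.b1 := by decide
lemma exrcv_to_q2 : ∀ x m, ExRcv x m ExQ.q2 → x = ExQ.q2 := by decide
lemma exbr_b2 : ∀ x y, ExBr x ExM.b2 y → x = ExQ.q3 := by decide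
lemma exbr_a : ∀ x y, ExBr x ExM.a y → x = ExQ.q0 := by decide

section StaticAnalysis

variable {ν : Type} [Fintype ν] [DecidableEq ν] {r : ℕ} (ρ : SExec ExProt ν r)

lemma lab_zero (v : ν) : ρ.lab 0 v = ExQ.q0 := by
  have := ρ.init v
  simpa [ExProt] using this

/-- Going one step backwards from `q0` stays at `q0`. -/
lemma backstep_q0 (i : Fin r) (v : ν) (h : ρ.lab i.succ v = ExQ.q0) :
    ρ.lab i.castSucc v = ExQ.q0 := by
  by_cases hv : v = ρ.sender i
  · subst hv
    have hb := ρ.step_br i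
    rw [h] at hb
    exact exbr_to_q0 _ _ hb
  · rcases ρ.step_rcv i v hv with ⟨h1, h2⟩
    by_cases he : ρ.E (ρ.sender i) v
    · have := h1 he; rw [h] at this; exact exrcv_to_q0 _ _ this
    · rw [← h2 he]; exact h

/-- `q0` persists backwards. -/
lemma q0_persist (v : ν) : ∀ (t : Fin (r + 1)), ρ.lab t v = ExQ.q0 →
    ∀ s : Fin (r + 1), s ≤ t → ρ.lab s v = ExQ.q0 := by
  intro t
  induction t using Fin.induction with
  | zero =>
    intro h s hs
    have : s = 0 := le_antisymm hs (Fin.zero_le s)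
    rw [this]; exact h
  | succ i ih =>
    intro h s hs
    have h' : ρ.lab i.castSucc v = ExQ.q0 := backstep_q0 ρ i v h
    rcases lt_or_eq_of_le hs with hlt | heq
    · exact ih h' s (by
        have : s.val < i.val + 1 := hlt
        exact Fin.le_def.mpr (by simpa [Fin.coe_castSucc] using Nat.lt_succ_iff.mp this))
    · rw [heq]; exact h

lemma trace_q2 (w : ν) : ∀ (t : Fin (r + 1)), ρ.lab t w = ExQ.q2 →
    ∃ i : Fin r, i.val < t.val ∧ ρ.sender i = w ∧ ρ.msg i = ExM.b1 := by
  intro t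
  induction t using Fin.induction with
  | zero => intro h; rw [lab_zero] at h; exact absurd h (by decide)
  | succ i ih =>
    intro h
    by_cases hprev : ρ.lab i.castSucc w = ExQ.q2
    · rcases ih hprev with ⟨j, hj, hs, hm⟩
      exact ⟨j, Nat.lt_succ_of_lt (by simpa using hj), hs, hm⟩
    · by_cases hv : w = ρ.sender i
      · refine ⟨i, Nat.lt_succ_self _, hv.symm, ?_⟩
        have hb := ρ.step_br i
        rw [← hv, h] at hb
        exact exbr_to_q2 _ _ _ hb rfl
      · rcases ρ.step_rcv i w hv with ⟨h1, h2⟩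
        by_cases he : ρ.E (ρ.sender i) w
        · have := h1 he; rw [h] at this
          exact absurd (exrcv_to_q2 _ _ this) hprev
        · rw [← h2 he] at hprev; exact absurd h hprev

lemma trace_q3 (w : ν) : ∀ (t : Fin (r + 1)), ρ.lab t w = ExQ.q3 →
    ∃ i' : Fin r, i'.val < t.val ∧ w ≠ ρ.sender i' ∧ ρ.msg i' = ExM.a ∧
      ρ.E (ρ.sender i') w ∧ ρ.lab i'.castSucc w = ExQ.q2 := by
  intro t
  induction t using Fin.induction with
  | zero => intro h; rw [lab_zero] at h; exact absurd h (by decide)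
  | succ i ih =>
    intro h
    by_cases hprev : ρ.lab i.castSucc w = ExQ.q3
    · rcases ih hprev with ⟨j, hj, h1, h2, h3, h4⟩
      exact ⟨j, Nat.lt_succ_of_lt (by simpa using hj), h1, h2, h3, h4⟩
    · by_cases hv : w = ρ.sender i
      · have hb := ρ.step_br i
        rw [← hv, h] at hb
        exact absurd hb (exbr_to_q3 _ _)
      · rcases ρ.step_rcv i w hv with ⟨h1, h2⟩
        by_cases he : ρ.E (ρ.sender i) w
        · have hr := h1 he; rw [h] at hr
          rcases exrcv_to_q3 _ _ hr with hq3 | ⟨hq2, hm⟩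
          · exact absurd hq3 hprev
          · exact ⟨i, Nat.lt_succ_self _, hv, hm, he, hq2⟩
        · rw [← h2 he] at hprev; exact absurd h hprev

lemma trace_smiley (v : ν) : ∀ (t : Fin (r + 1)), ρ.lab t v = ExQ.smiley →
    ∃ j : Fin r, j.val < t.val ∧ v ≠ ρ.sender j ∧ ρ.msg j = ExM.b2 ∧
      ρ.E (ρ.sender j) v ∧ ρ.lab j.castSucc v = ExQ.r1 := by
  intro t
  induction t using Fin.induction with
  | zero => intro h; rw [lab_zero] at h; exact absurd h (by decide)
  | succ i ih =>
    intro h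
    by_cases hprev : ρ.lab i.castSucc v = ExQ.smiley
    · rcases ih hprev with ⟨j, hj, h1, h2, h3, h4⟩
      exact ⟨j, Nat.lt_succ_of_lt (by simpa using hj), h1, h2, h3, h4⟩
    · by_cases hv : v = ρ.sender i
      · have hb := ρ.step_br i
        rw [← hv, h] at hb
        exact absurd hb (exbr_to_smiley _ _)
      · rcases ρ.step_rcv i v hv with ⟨h1, h2⟩
        by_cases he : ρ.E (ρ.sender i) v
        · have hr := h1 he; rw [h] at hr
          rcases exrcv_to_smiley _ _ hr with hsm | ⟨hr1, hm⟩
          · exact absurd hsm hprev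
          · exact ⟨i, Nat.lt_succ_self _, hv, hm, he, hr1⟩
        · rw [← h2 he] at hprev; exact absurd h hprev

end StaticAnalysis

/- ## The reconfigurable witness -/

def WitEdge (x y : Fin 3) (v w : Fin 3) : Prop := (v = x ∧ w = y) ∨ (v = y ∧ w = x)

instance (x y v w : Fin 3) : Decidable (WitEdge x y v w) :=
  inferInstanceAs (Decidable (_ ∨ _))

def WitExec : RExec ExProt (Fin 3) 4 where
  lab := ![![.q0, .q0, .q0], ![.q0, .q1, .q0], ![.q0, .q2, .r1],
           ![.q0, .q3, .r1], ![.q0, .q4, .smiley]]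
  edges := ![WitEdge 0 1, WitEdge 1 2, WitEdge 0 1, WitEdge 1 2, WitEdge 0 1]
  edges_symm := by
    intro i
    fin_cases i <;> intro x y h <;>
      first
        | exact (by decide : ∀ x y : Fin 3, WitEdge 0 1 x y → WitEdge 0 1 y x) x y h
        | exact (by decide : ∀ x y : Fin 3, WitEdge 1 2 x y → WitEdge 1 2 y x) x y h
  edges_irrefl := by
    intro i
    fin_cases i <;> intro x h <;>
      first
        | exact (by decide : ∀ x : Fin 3, ¬ WitEdge 0 1 x x) x h
        | exact (by decide : ∀ x : Fin 3, ¬ WitEdge 1 2 x x) x h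
  sender := ![0, 1, 0, 1]
  msg := ![.a, .b1, .a, .b2]
  init := by decide
  step_br := by intro i; fin_cases i <;> exact trivial
  step_rcv := by
    intro i v
    fin_cases i <;> fin_cases v <;> intro hv <;>
      first
        | exact absurd rfl hv
        | (constructor <;> first
            | (intro he
               first
                | rfl
                | exact Or.inl rfl
                | exact Or.inr rfl
                | (replace he : (_ = _ ∧ _ = _) ∨ (_ = _ ∧ _ = _) := he
                   rcases he with ⟨h1, h2⟩ | ⟨h1, h2⟩ <;>
                     first | exact absurd h1 (by decide) | exact absurd h2 (by decide)))
            | (intro hne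
               first
                | rfl
                | (exfalso
                   apply hne
                   show (_ = _ ∧ _ = _) ∨ (_ = _ ∧ _ = _)
                   first | exact Or.inl ⟨rfl, rfl⟩ | exact Or.inr ⟨rfl, rfl⟩)))

/-- **Static non-coverability versus reconfigurable coverability** for the example
protocol `B_ex`: no static execution covers `{☺}`, but some reconfigurable execution
with 3 nodes does. -/
theorem static_noncoverable_but_reconfigurable_coverable :
    (∀ (ν : Type) [Fintype ν] [DecidableEq ν] (r : ℕ) (ρ : SExec ExProt ν r),
      ¬ ρ.Covers {ExQ.smiley}) ∧
    (∃ (r : ℕ) (ρ : RExec ExProt (Fin 3) r), ρ.Covers {ExQ.smiley}) := by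
  constructor
  · intro ν _ _ r ρ hcov
    rcases hcov with ⟨v, hv⟩
    have hsm : ρ.lab (Fin.last r) v = ExQ.smiley := by
      simpa [SExec.lastLab] using hv
    -- trace smiley back to a `b2` reception
    rcases trace_smiley ρ v _ hsm with ⟨j, _, hvs, hmj, hEj, _⟩
    set w := ρ.sender j with hw
    -- the sender of `b2` was in `q3`
    have hwq3 : ρ.lab j.castSucc w = ExQ.q3 := by
      have hb := ρ.step_br j
      rw [hmj] at hb
      exact exbr_b2 _ _ hb
    -- trace `q3` back to an `a` reception from a neighbour `u`
    rcases trace_q3 ρ w _ hwq3 with ⟨i', _, hws, hmi', hEi', hwq2⟩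
    set u := ρ.sender i' with hu
    -- the sender of `a` was in `q0`
    have huq0 : ρ.lab i'.castSucc u = ExQ.q0 := by
      have hb := ρ.step_br i'
      rw [hmi'] at hb
      exact exbr_a _ _ hb
    -- trace `q2` back to a `b1` broadcast by `w`
    rcases trace_q2 ρ w _ hwq2 with ⟨i, hii', hsi, hmi⟩
    -- `u` is a neighbour of `w = sender i`, distinct from it
    have huw : u ≠ w := fun h => hws (h ▸ hu)
    have hune : u ≠ ρ.sender i := by rw [hsi]; exact huw
    have hEwu : ρ.E (ρ.sender i) u := by rw [hsi]; exact ρ.E_symm hEi'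
    -- `u` was in `q0` both before and after step `i`
    have hle1 : (i.succ : Fin (r + 1)) ≤ i'.castSucc := by
      have : i.val < i'.val := by simpa using hii'
      exact Fin.le_def.mpr (by simpa using this)
    have hle2 : (i.castSucc : Fin (r + 1)) ≤ i'.castSucc := by
      have : i.val < i'.val := by simpa using hii'
      exact Fin.le_def.mpr (by simpa using Nat.le_of_lt this)
    have h1 : ρ.lab i.succ u = ExQ.q0 := q0_persist ρ u _ huq0 _ hle1
    have h2 : ρ.lab i.castSucc u = ExQ.q0 := q0_persist ρ u _ huq0 _ hle2
    -- but `u` received `b1` at step `i`, leaving `q0`: contradiction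
    have hr := (ρ.step_rcv i u hune).1 hEwu
    rw [h1, h2, hmi] at hr
    exact exrcv_q0_b1 _ hr rfl
  · exact ⟨4, WitExec, 2, rfl⟩
end

section
/- Tradeoff between number of nodes and covering length for the protocol T_n under the static semantics: for every n ≥ 1, (i) there exists a static execution of T_n covering {☺} with n + 2 nodes and length 2n (linear in n), while (ii) every static execution of T_n covering {☺} with exactly 3 nodes has length at least n² (quadratic in n). -/
/- ## The tradeoff protocol T_n -/

abbrev TnQ (n : ℕ) := Fin (n + 1) ⊕ Fin n
abbrev TnM (n : ℕ) := Option (Fin n)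

def TnBr (n : ℕ) : TnQ n → TnM n → TnQ n → Prop
  | .inl k, none, q' => (k : ℕ) = 0 ∧ q' = .inl k
  | .inl k, some _, q' => (k : ℕ) = n ∧ q' = .inl ⟨0, Nat.succ_pos n⟩
  | _, _, _ => False

def TnRcvF (n : ℕ) (q : TnQ n) (m : TnM n) : TnQ n :=
  match q, m with
  | .inl k, none => if h : (k : ℕ) + 1 < n + 1 then .inl ⟨(k : ℕ) + 1, h⟩ else .inl k
  | .inl k, some i => if (k : ℕ) = n ∧ (i : ℕ) = 0 then .inr ⟨0, Fin.pos i⟩ else .inl k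
  | .inr j, some i =>
      if h : (i : ℕ) = (j : ℕ) + 1 ∧ (j : ℕ) + 1 < n then .inr ⟨(j : ℕ) + 1, h.2⟩
      else .inr j
  | .inr j, none => .inr j

def TnProt (n : ℕ) : BroadcastProtocol (TnQ n) (TnM n) where
  I := {Sum.inl (0 : Fin (n + 1))}
  br := TnBr n
  rcv := fun q m q' => q' = TnRcvF n q m
  complete := fun q m => ⟨TnRcvF n q m, rfl⟩

def TnSmiley (n : ℕ) (hn : 1 ≤ n) : TnQ n := Sum.inr ⟨n - 1, by omega⟩

-- ## lower-bound machinery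
def lev {n : ℕ} : TnQ n → ℕ
  | .inl k => (k : ℕ)
  | .inr _ => 0

def cost (n : ℕ) : TnQ n → ℕ → ℕ → ℕ
  | .inl k, x, y => (n - min (k : ℕ) (max x y)) + n + ((n - 1) * n - min x y)
  | .inr j, x, y => (n - 1 - (j : ℕ)) + ((n - 1 - (j : ℕ)) * n - (x + y))

lemma lev_le {n : ℕ} (s : TnQ n) : lev s ≤ n := by
  cases s with
  | inl k => exact k.is_le
  | inr j => exact Nat.zero_le n

lemma lev_none {n : ℕ} {b b' : TnQ n} (h : b' = TnRcvF n b none ∨ b' = b) :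
    lev b ≤ lev b' ∧ lev b' ≤ lev b + 1 := by
  rcases h with rfl | rfl
  · cases b with
    | inl k => simp only [TnRcvF]; split_ifs <;> simp [lev]
    | inr j => simp [TnRcvF, lev]
  · omega

lemma lev_some {n : ℕ} {i : Fin n} {b b' : TnQ n}
    (h : b' = TnRcvF n b (some i) ∨ b' = b) : lev b' ≤ lev b := by
  rcases h with rfl | rfl
  · cases b with
    | inl k => simp only [TnRcvF]; split_ifs <;> simp [lev]
    | inr j => simp only [TnRcvF]; split_ifs <;> simp [lev]
  · omega

lemma cost_comm (n : ℕ) (s : TnQ n) (x y : ℕ) : cost n s x y = cost n s y x := by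
  cases s <;> simp [cost, Nat.min_comm, Nat.max_comm, Nat.add_comm]

lemma cost_sender (n : ℕ) (m : TnM n) (a a' b b' c c' : TnQ n)
    (ha : TnBr n a m a')
    (hb : b' = TnRcvF n b m ∨ b' = b)
    (hc : c' = TnRcvF n c m ∨ c' = c) :
    cost n a (lev b) (lev c) ≤ cost n a' (lev b') (lev c') + 1 := by
  rcases a with k | j
  swap
  · simp [TnBr] at ha
  cases m with
  | none =>
      obtain ⟨hk, rfl⟩ := ha
      have hb2 := lev_none hb
      have hc2 := lev_none hc
      show (n - min (k : ℕ) (max (lev b) (lev c))) + n + ((n - 1) * n - min (lev b) (lev c))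
        ≤ (n - min (k : ℕ) (max (lev b') (lev c'))) + n
            + ((n - 1) * n - min (lev b') (lev c')) + 1
      set P := (n - 1) * n with hP
      omega
  | some i =>
      obtain ⟨hk, rfl⟩ := ha
      have hb2 := lev_some hb
      have hc2 := lev_some hc
      have hbn := lev_le b
      have hcn := lev_le c
      show (n - min (k : ℕ) (max (lev b) (lev c))) + n + ((n - 1) * n - min (lev b) (lev c))
        ≤ (n - min 0 (max (lev b') (lev c'))) + n
            + ((n - 1) * n - min (lev b') (lev c')) + 1
      set P := (n - 1) * n with hP
      omega

lemma cost_receiver (n : ℕ) (m : TnM n) (a a' b b' c c' : TnQ n)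
    (ha : TnBr n a m a')
    (hb : b' = TnRcvF n b m ∨ b' = b)
    (hc : c' = TnRcvF n c m ∨ c' = c) :
    cost n b (lev a) (lev c) ≤ cost n b' (lev a') (lev c') + 1 := by
  rcases a with k | j
  swap
  · simp [TnBr] at ha
  have hcn := lev_le c
  have hcn' := lev_le c'
  cases m with
  | none =>
      obtain ⟨hk, rfl⟩ := ha
      have hc2 := lev_none hc
      rcases b with kb | jb
      · rcases hb with rfl | rfl
        · simp only [TnRcvF]
          split_ifs with h
          · show (n - min (kb : ℕ) (max (k : ℕ) (lev c))) + n
                  + ((n - 1) * n - min (k : ℕ) (lev c))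
              ≤ (n - min ((kb : ℕ) + 1) (max (k : ℕ) (lev c'))) + n
                  + ((n - 1) * n - min (k : ℕ) (lev c')) + 1
            set P := (n - 1) * n with hP
            omega
          · show (n - min (kb : ℕ) (max (k : ℕ) (lev c))) + n
                  + ((n - 1) * n - min (k : ℕ) (lev c))
              ≤ (n - min (kb : ℕ) (max (k : ℕ) (lev c'))) + n
                  + ((n - 1) * n - min (k : ℕ) (lev c')) + 1
            set P := (n - 1) * n with hP
            omega
        · show (n - min (kb : ℕ) (max (k : ℕ) (lev c))) + n
                + ((n - 1) * n - min (k : ℕ) (lev c))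
            ≤ (n - min (kb : ℕ) (max (k : ℕ) (lev c'))) + n
                + ((n - 1) * n - min (k : ℕ) (lev c')) + 1
          set P := (n - 1) * n with hP
          omega
      · have hb' : b' = .inr jb := by
          rcases hb with rfl | rfl <;> simp [TnRcvF]
        subst hb'
        show (n - 1 - (jb : ℕ)) + ((n - 1 - (jb : ℕ)) * n - ((k : ℕ) + lev c))
          ≤ (n - 1 - (jb : ℕ)) + ((n - 1 - (jb : ℕ)) * n - ((k : ℕ) + lev c')) + 1
        set A := (n - 1 - (jb : ℕ)) * n with hA
        omega
  | some i =>
      obtain ⟨hk, rfl⟩ := ha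
      have hc2 := lev_some hc
      rcases b with kb | jb
      · have hkb := kb.is_le
        rcases hb with rfl | rfl
        · simp only [TnRcvF]
          split_ifs with h
          · -- b : q_n --??b_1--> r_1
            show (n - min (kb : ℕ) (max (k : ℕ) (lev c))) + n
                  + ((n - 1) * n - min (k : ℕ) (lev c))
              ≤ (n - 1) + ((n - 1) * n - (0 + lev c')) + 1
            set P := (n - 1) * n with hP
            omega
          · show (n - min (kb : ℕ) (max (k : ℕ) (lev c))) + n
                  + ((n - 1) * n - min (k : ℕ) (lev c))
              ≤ (n - min (kb : ℕ) (max 0 (lev c'))) + n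
                  + ((n - 1) * n - min 0 (lev c')) + 1
            set P := (n - 1) * n with hP
            omega
        · show (n - min (kb : ℕ) (max (k : ℕ) (lev c))) + n
                + ((n - 1) * n - min (k : ℕ) (lev c))
            ≤ (n - min (kb : ℕ) (max 0 (lev c'))) + n
                + ((n - 1) * n - min 0 (lev c')) + 1
          set P := (n - 1) * n with hP
          omega
      · rcases hb with rfl | rfl
        · simp only [TnRcvF]
          split_ifs with h
          · -- b : r_j --??b_{j+1}--> r_{j+1}
            obtain ⟨hi, hj⟩ := h
            have hQ : (n - 1 - (jb : ℕ)) * n = (n - 1 - ((jb : ℕ) + 1)) * n + n := by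
              have h2 : n - 1 - (jb : ℕ) = (n - 1 - ((jb : ℕ) + 1)) + 1 := by omega
              rw [h2, Nat.succ_mul]
            show (n - 1 - (jb : ℕ)) + ((n - 1 - (jb : ℕ)) * n - ((k : ℕ) + lev c))
              ≤ (n - 1 - ((jb : ℕ) + 1))
                  + ((n - 1 - ((jb : ℕ) + 1)) * n - (0 + lev c')) + 1
            set A := (n - 1 - (jb : ℕ)) * n with hA
            set B := (n - 1 - ((jb : ℕ) + 1)) * n with hB
            omega
          · show (n - 1 - (jb : ℕ)) + ((n - 1 - (jb : ℕ)) * n - ((k : ℕ) + lev c))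
              ≤ (n - 1 - (jb : ℕ)) + ((n - 1 - (jb : ℕ)) * n - (0 + lev c')) + 1
            set A := (n - 1 - (jb : ℕ)) * n with hA
            omega
        · show (n - 1 - (jb : ℕ)) + ((n - 1 - (jb : ℕ)) * n - ((k : ℕ) + lev c))
            ≤ (n - 1 - (jb : ℕ)) + ((n - 1 - (jb : ℕ)) * n - (0 + lev c')) + 1
          set A := (n - 1 - (jb : ℕ)) * n with hA
          omega

def psi (n : ℕ) (s : Fin 3 → TnQ n) : ℕ :=
  min (min (cost n (s 0) (lev (s 1)) (lev (s 2)))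
           (cost n (s 1) (lev (s 0)) (lev (s 2))))
      (cost n (s 2) (lev (s 0)) (lev (s 1)))

lemma psi_step (n : ℕ) (m : TnM n) (s s' : Fin 3 → TnQ n) (w : Fin 3)
    (hbr : TnBr n (s w) m (s' w))
    (hrc : ∀ v, v ≠ w → s' v = TnRcvF n (s v) m ∨ s' v = s v) :
    psi n s ≤ psi n s' + 1 := by
  fin_cases w
  · have h0 := cost_sender n m (s 0) (s' 0) (s 1) (s' 1) (s 2) (s' 2) hbr
      (hrc 1 (by decide)) (hrc 2 (by decide))
    have h1 := cost_receiver n m (s 0) (s' 0) (s 1) (s' 1) (s 2) (s' 2) hbr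
      (hrc 1 (by decide)) (hrc 2 (by decide))
    have h2 := cost_receiver n m (s 0) (s' 0) (s 2) (s' 2) (s 1) (s' 1) hbr
      (hrc 2 (by decide)) (hrc 1 (by decide))
    simp only [psi]
    omega
  · have h1 := cost_sender n m (s 1) (s' 1) (s 0) (s' 0) (s 2) (s' 2) hbr
      (hrc 0 (by decide)) (hrc 2 (by decide))
    have h0 := cost_receiver n m (s 1) (s' 1) (s 0) (s' 0) (s 2) (s' 2) hbr
      (hrc 0 (by decide)) (hrc 2 (by decide))
    have h2 := cost_receiver n m (s 1) (s' 1) (s 2) (s' 2) (s 0) (s' 0) hbr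
      (hrc 2 (by decide)) (hrc 0 (by decide))
    have h2' : cost n (s 2) (lev (s 0)) (lev (s 1))
        ≤ cost n (s' 2) (lev (s' 0)) (lev (s' 1)) + 1 := by
      rw [cost_comm n (s 2), cost_comm n (s' 2)]; exact h2
    simp only [psi]
    omega
  · have h2 := cost_sender n m (s 2) (s' 2) (s 0) (s' 0) (s 1) (s' 1) hbr
      (hrc 0 (by decide)) (hrc 1 (by decide))
    have h0 := cost_receiver n m (s 2) (s' 2) (s 0) (s' 0) (s 1) (s' 1) hbr
      (hrc 0 (by decide)) (hrc 1 (by decide))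
    have h1 := cost_receiver n m (s 2) (s' 2) (s 1) (s' 1) (s 0) (s' 0) hbr
      (hrc 1 (by decide)) (hrc 0 (by decide))
    have h0' : cost n (s 0) (lev (s 1)) (lev (s 2))
        ≤ cost n (s' 0) (lev (s' 1)) (lev (s' 2)) + 1 := by
      rw [cost_comm n (s 0), cost_comm n (s' 0)]; exact h0
    have h1' : cost n (s 1) (lev (s 0)) (lev (s 2))
        ≤ cost n (s' 1) (lev (s' 0)) (lev (s' 2)) + 1 := by
      rw [cost_comm n (s 1), cost_comm n (s' 1)]; exact h1
    simp only [psi]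
    omega

lemma psi_init (n : ℕ) (hn : 1 ≤ n) (s : Fin 3 → TnQ n)
    (h : ∀ v, s v = Sum.inl 0) : n ^ 2 ≤ psi n s := by
  have key : n ^ 2 ≤ cost n (Sum.inl (0 : Fin (n+1))) (lev (Sum.inl (0 : Fin (n+1))))
      (lev (Sum.inl (0 : Fin (n+1)))) := by
    show n ^ 2 ≤ (n - min ((0 : Fin (n+1)) : ℕ)
        (max (lev (Sum.inl (0 : Fin (n+1)))) (lev (Sum.inl (0 : Fin (n+1)))))) + n
        + ((n - 1) * n - min (lev (Sum.inl (0 : Fin (n+1)))) (lev (Sum.inl (0 : Fin (n+1)))))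
    have h1 : (n - 1) * n = n * n - n := Nat.sub_one_mul n n
    have h2 : n ^ 2 = n * n := sq n
    have h3 : lev (Sum.inl (0 : Fin (n+1))) = 0 := by simp [lev]
    rw [h1, h2, h3]
    have h4 : ((0 : Fin (n+1)) : ℕ) = 0 := rfl
    rw [h4]
    set N := n * n with hN
    have : n ≤ N := by rw [hN]; nlinarith
    omega
  simp only [psi, h]
  omega

lemma psi_final (n : ℕ) (hn : 1 ≤ n) (s : Fin 3 → TnQ n) (v : Fin 3)
    (h : s v = Sum.inr ⟨n - 1, by omega⟩) : psi n s = 0 := by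
  have key : ∀ x y, cost n (Sum.inr (⟨n - 1, by omega⟩ : Fin n)) x y = 0 := by
    intro x y
    show (n - 1 - (n - 1)) + ((n - 1 - (n - 1)) * n - (x + y)) = 0
    simp [Nat.sub_self]
  have hv3 := v.2
  have h3 : (v : ℕ) = 0 ∨ (v : ℕ) = 1 ∨ (v : ℕ) = 2 := by omega
  have hle : psi n s ≤ 0 := by
    rcases h3 with h3 | h3 | h3
    · have hv : v = 0 := Fin.ext (by simpa using h3)
      subst hv
      simp only [psi, h, key]
      omega
    · have hv : v = 1 := Fin.ext (by simpa using h3)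
      subst hv
      simp only [psi, h, key]
      omega
    · have hv : v = 2 := Fin.ext (by simpa using h3)
      subst hv
      simp only [psi, h, key]
      omega
  omega

-- ## part (i) construction
def exE (n : ℕ) : Fin (n + 2) → Fin (n + 2) → Prop :=
  fun v v' => v ≠ v' ∧ (n ≤ (v : ℕ) ∨ n ≤ (v' : ℕ))

def exLab (n : ℕ) (i : Fin (2 * n + 1)) (v : Fin (n + 2)) : TnQ n :=
  if (v : ℕ) = n + 1 then .inl ⟨0, Nat.succ_pos n⟩
  else if (v : ℕ) = n then
    (if h : (i : ℕ) ≤ n then .inl ⟨(i : ℕ), by omega⟩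
     else .inr ⟨(i : ℕ) - n - 1, by have := i.2; omega⟩)
  else if (i : ℕ) ≤ n + (v : ℕ) then .inl ⟨min (i : ℕ) n, by omega⟩
  else .inl ⟨0, Nat.succ_pos n⟩

lemma exLab_B (n : ℕ) (i : Fin (2 * n + 1)) (v : Fin (n + 2)) (h : (v : ℕ) = n + 1) :
    exLab n i v = .inl ⟨0, Nat.succ_pos n⟩ := by
  unfold exLab; rw [if_pos h]

lemma exLab_t_low (n : ℕ) (i : Fin (2 * n + 1)) (v : Fin (n + 2)) (h : (v : ℕ) = n)
    (hi : (i : ℕ) ≤ n) : exLab n i v = .inl ⟨(i : ℕ), by omega⟩ := by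
  unfold exLab; rw [if_neg (by omega), if_pos h, dif_pos hi]

lemma exLab_t_high (n : ℕ) (i : Fin (2 * n + 1)) (v : Fin (n + 2)) (h : (v : ℕ) = n)
    (hi : ¬ (i : ℕ) ≤ n) : exLab n i v = .inr ⟨(i : ℕ) - n - 1, by have := i.2; omega⟩ := by
  unfold exLab; rw [if_neg (by omega), if_pos h, dif_neg hi]

lemma exLab_w_low (n : ℕ) (i : Fin (2 * n + 1)) (v : Fin (n + 2)) (h : (v : ℕ) < n)
    (hi : (i : ℕ) ≤ n + (v : ℕ)) : exLab n i v = .inl ⟨min (i : ℕ) n, by omega⟩ := by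
  unfold exLab; rw [if_neg (by omega), if_neg (by omega), if_pos hi]

lemma exLab_w_high (n : ℕ) (i : Fin (2 * n + 1)) (v : Fin (n + 2)) (h : (v : ℕ) < n)
    (hi : ¬ (i : ℕ) ≤ n + (v : ℕ)) : exLab n i v = .inl ⟨0, Nat.succ_pos n⟩ := by
  unfold exLab; rw [if_neg (by omega), if_neg (by omega), if_neg hi]

def exSender (n : ℕ) : Fin (2 * n) → Fin (n + 2) :=
  fun i => if (i : ℕ) < n then ⟨n + 1, by omega⟩ else ⟨(i : ℕ) - n, by have := i.2; omega⟩

def exMsg (n : ℕ) : Fin (2 * n) → TnM n :=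
  fun i => if h : (i : ℕ) < n then none else some ⟨(i : ℕ) - n, by have := i.2; omega⟩

example (n : ℕ) : True := trivial

set_option maxHeartbeats 1600000 in
def exExec (n : ℕ) : SExec (TnProt n) (Fin (n + 2)) (2 * n) where
  lab := exLab n
  E := exE n
  E_symm := fun _ _ h => ⟨h.1.symm, h.2.symm⟩
  E_irrefl := fun _ h => h.1 rfl
  sender := exSender n
  msg := exMsg n
  init := by
    intro v
    have hv2 := v.2
    show exLab n 0 v ∈ ({Sum.inl 0} : Finset (TnQ n))
    rw [Finset.mem_singleton]
    have h0 : ((0 : Fin (2 * n + 1)) : ℕ) = 0 := by simp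
    by_cases h1 : (v : ℕ) = n + 1
    · rw [exLab_B n _ v h1]
      exact congrArg Sum.inl (Fin.ext (by simp))
    · by_cases h2 : (v : ℕ) = n
      · rw [exLab_t_low n _ v h2 (by omega)]
        exact congrArg Sum.inl (Fin.ext (by simp [h0]))
      · rw [exLab_w_low n _ v (by omega) (by omega)]
        exact congrArg Sum.inl (Fin.ext (by simp [h0]))
  step_br := by
    intro i
    have hi2 := i.2
    show TnBr n (exLab n i.castSucc (exSender n i)) (exMsg n i) (exLab n i.succ (exSender n i))
    by_cases hi : (i : ℕ) < n
    · have hs : exSender n i = ⟨n + 1, by omega⟩ := by simp [exSender, hi]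
      have hm : exMsg n i = none := by simp [exMsg, hi]
      rw [hs, hm, exLab_B n _ _ (by simp), exLab_B n _ _ (by simp)]
      exact ⟨rfl, rfl⟩
    · have hs : exSender n i = ⟨(i : ℕ) - n, by omega⟩ := by simp [exSender, hi]
      have hm : exMsg n i = some ⟨(i : ℕ) - n, by omega⟩ := by simp [exMsg, hi]
      rw [hs, hm,
        exLab_w_low n i.castSucc _ (by simp; omega) (by simp [Fin.coe_castSucc]; omega),
        exLab_w_high n i.succ _ (by simp; omega) (by simp [Fin.val_succ]; omega)]
      refine ⟨by simp [Fin.coe_castSucc]; omega, ?_⟩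
      exact congrArg Sum.inl (Fin.ext (by simp))
  step_rcv := by
    intro i v hvs
    have hi2 := i.2
    have hv2 := v.2
    by_cases hi : (i : ℕ) < n
    · -- phase 1 : the hub ⟨n+1⟩ broadcasts a
      have hs : exSender n i = ⟨n + 1, by omega⟩ := by simp [exSender, hi]
      have hm : exMsg n i = none := by simp [exMsg, hi]
      have hvn : (v : ℕ) ≠ n + 1 := by
        intro hc; apply hvs; apply Fin.ext; rw [hs]; simpa using hc
      constructor
      · intro _
        show exLab n i.succ v = TnRcvF n (exLab n i.castSucc v) (exMsg n i)
        rw [hm]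
        by_cases hv : (v : ℕ) = n
        · rw [exLab_t_low n _ v hv (by simp [Fin.coe_castSucc]; omega),
              exLab_t_low n _ v hv (by simp [Fin.val_succ]; omega)]
          show Sum.inl _ = TnRcvF n (Sum.inl _) none
          simp only [TnRcvF]
          rw [dif_pos (by simp [Fin.coe_castSucc]; omega)]
          exact congrArg Sum.inl (Fin.ext (by simp))
        · have hvlt : (v : ℕ) < n := by omega
          rw [exLab_w_low n _ v hvlt (by simp [Fin.coe_castSucc]; omega),
              exLab_w_low n _ v hvlt (by simp [Fin.val_succ]; omega)]
          show Sum.inl _ = TnRcvF n (Sum.inl _) none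
          simp only [TnRcvF]
          rw [dif_pos (by simp [Fin.coe_castSucc]; omega)]
          exact congrArg Sum.inl (Fin.ext (by simp [Fin.val_succ, Fin.coe_castSucc]; omega))
      · intro hNE
        exfalso
        exact hNE ⟨Ne.symm hvs, Or.inl (by rw [hs]; simp)⟩
    · -- phase 2 : worker ⟨i-n⟩ broadcasts b_{i-n+1}
      have hs : exSender n i = ⟨(i : ℕ) - n, by omega⟩ := by simp [exSender, hi]
      have hm : exMsg n i = some ⟨(i : ℕ) - n, by omega⟩ := by simp [exMsg, hi]
      by_cases hv1 : (v : ℕ) = n + 1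
      · constructor
        · intro _
          show exLab n i.succ v = TnRcvF n (exLab n i.castSucc v) (exMsg n i)
          rw [hm, exLab_B n i.succ v hv1, exLab_B n i.castSucc v hv1]
          show Sum.inl _ = TnRcvF n (Sum.inl _) (some _)
          simp only [TnRcvF]
          rw [if_neg (by simp; omega)]
        · intro hNE
          exact absurd ⟨Ne.symm hvs, Or.inr (by omega)⟩ hNE
      · by_cases hv : (v : ℕ) = n
        · constructor
          · intro _
            show exLab n i.succ v = TnRcvF n (exLab n i.castSucc v) (exMsg n i)
            rw [hm]
            by_cases hieq : (i : ℕ) = n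
            · rw [exLab_t_low n i.castSucc v hv (by simp [Fin.coe_castSucc]; omega),
                  exLab_t_high n i.succ v hv (by simp [Fin.val_succ]; omega)]
              show Sum.inr _ = TnRcvF n (Sum.inl _) (some _)
              simp only [TnRcvF]
              rw [if_pos (by simp [Fin.coe_castSucc]; omega)]
              exact congrArg Sum.inr (Fin.ext (by simp [Fin.val_succ]; omega))
            · rw [exLab_t_high n i.castSucc v hv (by simp [Fin.coe_castSucc]; omega),
                  exLab_t_high n i.succ v hv (by simp [Fin.val_succ]; omega)]
              show Sum.inr _ = TnRcvF n (Sum.inr _) (some _)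
              simp only [TnRcvF]
              rw [dif_pos (by constructor <;> simp [Fin.coe_castSucc] <;> omega)]
              exact congrArg Sum.inr (Fin.ext (by simp [Fin.val_succ, Fin.coe_castSucc]; omega))
          · intro hNE
            exact absurd ⟨Ne.symm hvs, Or.inr (by omega)⟩ hNE
        · -- other worker : not a neighbour, unchanged
          have hvlt : (v : ℕ) < n := by omega
          have hE : ¬ exE n (exSender n i) v := by
            rintro ⟨-, h | h⟩
            · rw [hs] at h; simp only [Fin.val_mk] at h; omega
            · omega
          have hvi : (v : ℕ) ≠ (i : ℕ) - n := by
            intro hc; apply hvs; apply Fin.ext; rw [hs]; simpa using hc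
          constructor
          · intro h; exact absurd h hE
          · intro _
            show exLab n i.succ v = exLab n i.castSucc v
            by_cases hcase : (i : ℕ) + 1 ≤ n + (v : ℕ)
            · rw [exLab_w_low n i.succ v hvlt (by simp [Fin.val_succ]; omega),
                  exLab_w_low n i.castSucc v hvlt (by simp [Fin.coe_castSucc]; omega)]
              exact congrArg Sum.inl
                (Fin.ext (by simp [Fin.val_succ, Fin.coe_castSucc]; omega))
            · by_cases hcase2 : (i : ℕ) ≤ n + (v : ℕ)
              · exact absurd (by omega) hvi
              · rw [exLab_w_high n i.succ v hvlt (by simp [Fin.val_succ]; omega),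
                    exLab_w_high n i.castSucc v hvlt (by simp [Fin.coe_castSucc]; omega)]

lemma exExec_covers (n : ℕ) (hn : 1 ≤ n) :
    (exExec n).Covers {TnSmiley n hn} := by
  refine ⟨⟨n, by omega⟩, ?_⟩
  show exLab n (Fin.last (2 * n)) ⟨n, by omega⟩ ∈ ({TnSmiley n hn} : Set (TnQ n))
  rw [Set.mem_singleton_iff,
    exLab_t_high n _ _ (by simp) (by simp [Fin.val_last]; omega)]
  exact congrArg Sum.inr (Fin.ext (by simp [Fin.val_last, TnSmiley]; omega))


/-- **Tradeoff between number of nodes and covering length** for the protocol `T_n`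
under the static semantics: for every `n ≥ 1`, (i) there is a static execution of
`T_n` covering `{☺}` with `n + 2` nodes and length exactly `2n`, while (ii) every
static execution of `T_n` covering `{☺}` with exactly 3 nodes has length at least
`n²`. -/
theorem tradeoff_nodes_versus_length (n : ℕ) (hn : 1 ≤ n) :
    (∃ ρ : SExec (TnProt n) (Fin (n + 2)) (2 * n), ρ.Covers {TnSmiley n hn}) ∧
    (∀ (r : ℕ) (ρ : SExec (TnProt n) (Fin 3) r),
      ρ.Covers {TnSmiley n hn} → n ^ 2 ≤ r) := by
  constructor
  · exact ⟨exExec n, exExec_covers n hn⟩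
  · intro r ρ hcov
    obtain ⟨v, hv⟩ := hcov
    rw [Set.mem_singleton_iff] at hv
    have hinit : ∀ u, ρ.lab 0 u = Sum.inl 0 := by
      intro u
      have h := ρ.init u
      simpa [TnProt] using h
    have key : ∀ N : ℕ, N ≤ r →
        psi n (ρ.lab ⟨min 0 r, by omega⟩) ≤ psi n (ρ.lab ⟨min N r, by omega⟩) + N := by
      intro N
      induction N with
      | zero => intro _; omega
      | succ N ih =>
          intro hN
          have hNr : N < r := by omega
          have hs : psi n (ρ.lab ⟨min N r, by omega⟩)
              ≤ psi n (ρ.lab ⟨min (N + 1) r, by omega⟩) + 1 := by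
            have e1 : (⟨min N r, by omega⟩ : Fin (r + 1)) = (⟨N, hNr⟩ : Fin r).castSucc := by
              apply Fin.ext; simp [Fin.coe_castSucc]; omega
            have e2 : (⟨min (N + 1) r, by omega⟩ : Fin (r + 1)) = (⟨N, hNr⟩ : Fin r).succ := by
              apply Fin.ext; simp [Fin.val_succ]; omega
            rw [e1, e2]
            apply psi_step n (ρ.msg ⟨N, hNr⟩) _ _ (ρ.sender ⟨N, hNr⟩)
            · exact ρ.step_br ⟨N, hNr⟩
            · intro u hu
              have h2 := ρ.step_rcv ⟨N, hNr⟩ u hu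
              by_cases hE : ρ.E (ρ.sender ⟨N, hNr⟩) u
              · exact Or.inl (h2.1 hE)
              · exact Or.inr (h2.2 hE)
          have := ih (by omega)
          omega
    have h0 : (⟨min 0 r, by omega⟩ : Fin (r + 1)) = 0 := by apply Fin.ext; simp
    have hr : (⟨min r r, by omega⟩ : Fin (r + 1)) = Fin.last r := by
      apply Fin.ext; simp [Fin.val_last]
    have hK := key r le_rfl
    rw [h0, hr] at hK
    have h1 : n ^ 2 ≤ psi n (ρ.lab 0) := psi_init n hn _ hinit
    have h2 : psi n (ρ.lab (Fin.last r)) = 0 := psi_final n hn _ v hv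
    omega
end
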